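/- Define polynomials D(n) ∈ ℤ[x] by D(0)=1, D(1)=2x, D(2)=2x+x², D(3)=2x+2x², D(4)=x+4x²+x³, D(5)=5x²+4x³+x⁴, and D(n)=x·D(n−1)+x·D(n−2)+(x−x²)·D(n−3) for n ≥ 6. Then for all n ≥ 3 and k ≥ 0, the coefficient of x^k in D(n) equals ∑_{j=0}^{k} (binom(n−2j, k−j)·binom(j, n−k−j) + binom(n−2j−1, k−j)·binom(j, n−k−j−1) − binom(n−2j−2, k−j−2)·binom(j, n−k−j)). -/

import Mathlib

open Polynomial Finset

def binom (a b : ℤ) : ℤ := if 0 ≤ b ∧ b ≤ a then Nat.choose a.toNat b.toNat else 0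

noncomputable def D : ℕ → Polynomial ℤ
  | 0 => 1
  | 1 => 2 * X
  | 2 => 2 * X + X ^ 2
  | 3 => 2 * X + 2 * X ^ 2
  | 4 => X + 4 * X ^ 2 + X ^ 3
  | 5 => 5 * X ^ 2 + 4 * X ^ 3 + X ^ 4
  | (n + 6) => X * D (n + 5) + X * D (n + 4) + (X - X ^ 2) * D (n + 3)

lemma binom_zero (a b : ℤ) (h : b < 0 ∨ a < b) : binom a b = 0 := by
  unfold binom; rw [if_neg]; omega

lemma binom_self (a : ℤ) (h : 0 ≤ a) : binom a a = 1 := by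
  unfold binom; rw [if_pos ⟨h, le_refl _⟩, Nat.choose_self]; rfl

lemma binom_zr (a : ℤ) (h : 0 ≤ a) : binom a 0 = 1 := by
  unfold binom; rw [if_pos ⟨le_refl _, h⟩]; simp

lemma binom_pred (a : ℤ) (h : 1 ≤ a) : binom a (a-1) = a := by
  unfold binom
  rw [if_pos ⟨by omega, by omega⟩]
  have e1 : (a-1).toNat = a.toNat - (a.toNat - (a.toNat - 1)) := by omega
  rw [e1, Nat.choose_symm (by omega)]
  have e2 : a.toNat - (a.toNat - 1) = 1 := by omega
  rw [e2, Nat.choose_one_right]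
  omega

lemma pascal (a b : ℤ) (h : ¬(a = 0 ∧ b = 0)) :
    binom a b = binom (a-1) b + binom (a-1) (b-1) := by
  by_cases hb : b < 0
  · rw [binom_zero a b (Or.inl hb), binom_zero _ b (Or.inl hb),
      binom_zero _ _ (Or.inl (by omega))]; ring
  by_cases hba : a < b
  · rw [binom_zero a b (Or.inr hba), binom_zero _ b (Or.inr (by omega))]
    rcases lt_or_ge (b-1) (a-1) with hc | hc
    · omega
    · rcases eq_or_lt_of_le hc with hc | hc
      · rw [← hc, binom_self _ (by omega)]; omega
      · rw [binom_zero _ _ (Or.inr hc)]; ring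
  by_cases hb0 : b = 0
  · subst hb0
    rw [binom_zero (a-1) (0-1) (Or.inl (by omega)), binom_zr a (by omega),
      binom_zr (a-1) (by omega)]; ring
  by_cases hab : b = a
  · subst hab
    rw [binom_self b (by omega), binom_zero (b-1) b (Or.inr (by omega)),
      binom_self (b-1) (by omega)]; ring
  · unfold binom
    rw [if_pos ⟨by omega, by omega⟩, if_pos ⟨by omega, by omega⟩, if_pos ⟨by omega, by omega⟩]
    have e1 : a.toNat = (a-1).toNat + 1 := by omega
    have e2 : b.toNat = (b-1).toNat + 1 := by omega
    rw [e1, e2, Nat.choose_succ_succ]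
    push_cast; ring

lemma term_zero {a1 b1 c1 d1 a2 b2 c2 d2 a3 b3 c3 d3 : ℤ}
    (h1 : (b1 < 0 ∨ a1 < b1) ∨ (d1 < 0 ∨ c1 < d1))
    (h2 : (b2 < 0 ∨ a2 < b2) ∨ (d2 < 0 ∨ c2 < d2))
    (h3 : (b3 < 0 ∨ a3 < b3) ∨ (d3 < 0 ∨ c3 < d3)) :
    binom a1 b1 * binom c1 d1 + binom a2 b2 * binom c2 d2 - binom a3 b3 * binom c3 d3 = 0 := by
  rcases h1 with h | h <;> rcases h2 with h' | h' <;> rcases h3 with h'' | h'' <;>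
    rw [binom_zero _ _ h, binom_zero _ _ h', binom_zero _ _ h''] <;> ring

def Tt (n k j : ℤ) : ℤ :=
  binom (n-2*j) (k-j) * binom j (n-k-j) + binom (n-2*j-1) (k-j) * binom j (n-k-j-1)
    - binom (n-2*j-2) (k-j-2) * binom j (n-k-j)

lemma Ttzero (n k j : ℤ) (h : k - j < 0) : Tt n k j = 0 := by
  unfold Tt
  rw [binom_zero (n-2*j) (k-j) (Or.inl h), binom_zero (n-2*j-1) (k-j) (Or.inl h),
    binom_zero (n-2*j-2) (k-j-2) (Or.inl (by omega))]
  ring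

def Fp (n k j : ℤ) : ℤ :=
    binom (n-2*j-5) (k-j-4) * binom j (n-k-j-2)
  + binom (n-2*j-5) (k-j-3) * binom j (n-k-j-2)
  - binom (n-2*j-4) (k-j-3) * binom j (n-k-j-2)
  - binom (n-2*j-4) (k-j-2) * binom j (n-k-j-3)
  - binom (n-2*j-4) (k-j-1) * binom j (n-k-j-3)
  + binom (n-2*j-3) (k-j-3) * binom j (n-k-j)
  - binom (n-2*j-3) (k-j-2) * binom j (n-k-j-2)
  + binom (n-2*j-3) (k-j-1) * binom j (n-k-j-3)
  - binom (n-2*j-3) (k-j-1) * binom j (n-k-j-2)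
  - binom (n-2*j-2) (k-j-2) * binom j (n-k-j)
  + binom (n-2*j-2) (k-j-1) * binom j (n-k-j-2)
  - binom (n-2*j-2) (k-j-1) * binom j (n-k-j-1)
  - binom (n-2*j-1) (k-j-1) * binom j (n-k-j)
  + binom (n-2*j-1) (k-j) * binom j (n-k-j-1)
  + binom (n-2*j) (k-j) * binom j (n-k-j)

lemma keyTt (n k j : ℤ) (hj : 0 ≤ j) :
    Tt n k j = Tt (n-1) (k-1) j + Tt (n-2) (k-1) j + Tt (n-3) (k-1) j - Tt (n-3) (k-2) j
      + (Fp n k j - Fp n k (j+1)) := by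
  have p11 : (binom (n-2*j-6) (k-j-4) - binom (n-2*j-7) (k-j-4) - binom (n-2*j-7) (k-j-5))
      * binom (j+1) (n-k-j-3) = 0 := by
    by_cases hc : n-2*j-6 = 0 ∧ k-j-4 = 0
    · rw [binom_zero (j+1) (n-k-j-3) (Or.inl (by omega))]; ring
    · rw [pascal (n-2*j-6) (k-j-4) hc]; ring_nf
  have p12 : (binom (n-2*j-5) (k-j-2) - binom (n-2*j-6) (k-j-2) - binom (n-2*j-6) (k-j-3))
      * binom (j+1) (n-k-j-4) = 0 := by
    by_cases hc : n-2*j-5 = 0 ∧ k-j-2 = 0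
    · rw [binom_zero (j+1) (n-k-j-4) (Or.inl (by omega))]; ring
    · rw [pascal (n-2*j-5) (k-j-2) hc]; ring_nf
  have p13 : (binom (n-2*j-4) (k-j-2) - binom (n-2*j-5) (k-j-2) - binom (n-2*j-5) (k-j-3))
      * binom (j+1) (n-k-j-3) = 0 := by
    by_cases hc : n-2*j-4 = 0 ∧ k-j-2 = 0
    · rw [binom_zero (j+1) (n-k-j-3) (Or.inl (by omega))]; ring
    · rw [pascal (n-2*j-4) (k-j-2) hc]; ring_nf
  have p21 : binom (n-2*j-5) (k-j-4)
      * (binom (j+1) (n-k-j-1) - binom j (n-k-j-1) - binom j (n-k-j-2)) = 0 := by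
    rw [pascal (j+1) (n-k-j-1) (by omega)]; ring_nf
  have p22 : binom (n-2*j-4) (k-j-3)
      * (binom (j+1) (n-k-j-1) - binom j (n-k-j-1) - binom j (n-k-j-2)) = 0 := by
    rw [pascal (j+1) (n-k-j-1) (by omega)]; ring_nf
  have p23 : binom (n-2*j-4) (k-j-2)
      * (binom (j+1) (n-k-j-2) - binom j (n-k-j-2) - binom j (n-k-j-3)) = 0 := by
    rw [pascal (j+1) (n-k-j-2) (by omega)]; ring_nf
  have p24 : binom (n-2*j-3) (k-j-2)
      * (binom (j+1) (n-k-j-1) - binom j (n-k-j-1) - binom j (n-k-j-2)) = 0 := by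
    rw [pascal (j+1) (n-k-j-1) (by omega)]; ring_nf
  have p25 : binom (n-2*j-3) (k-j-1)
      * (binom (j+1) (n-k-j-2) - binom j (n-k-j-2) - binom j (n-k-j-3)) = 0 := by
    rw [pascal (j+1) (n-k-j-2) (by omega)]; ring_nf
  have p26 : binom (n-2*j-2) (k-j-1)
      * (binom (j+1) (n-k-j-1) - binom j (n-k-j-1) - binom j (n-k-j-2)) = 0 := by
    rw [pascal (j+1) (n-k-j-1) (by omega)]; ring_nf
  simp only [Tt, Fp]
  ring_nf at p11 p12 p13 p21 p22 p23 p24 p25 p26 ⊢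
  linear_combination -p11 + p12 + p13 + p21 - p22 - p23 - p24 + p25 + p26

lemma Fp0 (n k : ℤ) (hn : 6 ≤ n) : Fp n k 0 = 0 := by
  simp only [Fp]
  rcases (by omega : n-k = 0 ∨ n-k = 1 ∨ n-k = 2 ∨ n-k = 3 ∨ (n-k < 0 ∨ 4 ≤ n-k)) with h|h|h|h|h
  · have z1 : binom 0 (n-k-0-1) = 0 := binom_zero 0 (n-k-0-1) (by omega)
    have z2 : binom 0 (n-k-0-2) = 0 := binom_zero 0 (n-k-0-2) (by omega)
    have z3 : binom 0 (n-k-0-3) = 0 := binom_zero 0 (n-k-0-3) (by omega)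
    have o0 : binom 0 (n-k-0) = 1 := by
      rw [show n-k-0 = (0:ℤ) from by omega]; exact binom_self 0 le_rfl
    have f1 : binom (n-2*0-3) (k-0-3) = 1 := by
      rw [show k-0-3 = n-2*0-3 from by omega]; exact binom_self _ (by omega)
    have f2 : binom (n-2*0-2) (k-0-2) = 1 := by
      rw [show k-0-2 = n-2*0-2 from by omega]; exact binom_self _ (by omega)
    have f3 : binom (n-2*0-1) (k-0-1) = 1 := by
      rw [show k-0-1 = n-2*0-1 from by omega]; exact binom_self _ (by omega)
    have f4 : binom (n-2*0) (k-0) = 1 := by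
      rw [show k-0 = n-2*0 from by omega]; exact binom_self _ (by omega)
    rw [z1, z2, z3, o0, f1, f2, f3, f4]; ring
  · have z0 : binom 0 (n-k-0) = 0 := binom_zero 0 (n-k-0) (by omega)
    have z2 : binom 0 (n-k-0-2) = 0 := binom_zero 0 (n-k-0-2) (by omega)
    have z3 : binom 0 (n-k-0-3) = 0 := binom_zero 0 (n-k-0-3) (by omega)
    have o1 : binom 0 (n-k-0-1) = 1 := by
      rw [show n-k-0-1 = (0:ℤ) from by omega]; exact binom_self 0 le_rfl
    have f1 : binom (n-2*0-2) (k-0-1) = 1 := by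
      rw [show k-0-1 = n-2*0-2 from by omega]; exact binom_self _ (by omega)
    have f2 : binom (n-2*0-1) (k-0) = 1 := by
      rw [show k-0 = n-2*0-1 from by omega]; exact binom_self _ (by omega)
    rw [z0, z2, z3, o1, f1, f2]; ring
  · have z0 : binom 0 (n-k-0) = 0 := binom_zero 0 (n-k-0) (by omega)
    have z1 : binom 0 (n-k-0-1) = 0 := binom_zero 0 (n-k-0-1) (by omega)
    have z3 : binom 0 (n-k-0-3) = 0 := binom_zero 0 (n-k-0-3) (by omega)
    have o2 : binom 0 (n-k-0-2) = 1 := by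
      rw [show n-k-0-2 = (0:ℤ) from by omega]; exact binom_self 0 le_rfl
    have f1 : binom (n-2*0-5) (k-0-4) = n-2*0-5 := by
      rw [show k-0-4 = n-2*0-5-1 from by omega]; exact binom_pred _ (by omega)
    have f2 : binom (n-2*0-5) (k-0-3) = 1 := by
      rw [show k-0-3 = n-2*0-5 from by omega]; exact binom_self _ (by omega)
    have f3 : binom (n-2*0-4) (k-0-3) = n-2*0-4 := by
      rw [show k-0-3 = n-2*0-4-1 from by omega]; exact binom_pred _ (by omega)
    have f4 : binom (n-2*0-3) (k-0-2) = n-2*0-3 := by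
      rw [show k-0-2 = n-2*0-3-1 from by omega]; exact binom_pred _ (by omega)
    have f5 : binom (n-2*0-3) (k-0-1) = 1 := by
      rw [show k-0-1 = n-2*0-3 from by omega]; exact binom_self _ (by omega)
    have f6 : binom (n-2*0-2) (k-0-1) = n-2*0-2 := by
      rw [show k-0-1 = n-2*0-2-1 from by omega]; exact binom_pred _ (by omega)
    rw [z0, z1, z3, o2, f1, f2, f3, f4, f5, f6]; ring
  · have z0 : binom 0 (n-k-0) = 0 := binom_zero 0 (n-k-0) (by omega)
    have z1 : binom 0 (n-k-0-1) = 0 := binom_zero 0 (n-k-0-1) (by omega)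
    have z2 : binom 0 (n-k-0-2) = 0 := binom_zero 0 (n-k-0-2) (by omega)
    have o3 : binom 0 (n-k-0-3) = 1 := by
      rw [show n-k-0-3 = (0:ℤ) from by omega]; exact binom_self 0 le_rfl
    have f1 : binom (n-2*0-4) (k-0-2) = n-2*0-4 := by
      rw [show k-0-2 = n-2*0-4-1 from by omega]; exact binom_pred _ (by omega)
    have f2 : binom (n-2*0-4) (k-0-1) = 1 := by
      rw [show k-0-1 = n-2*0-4 from by omega]; exact binom_self _ (by omega)
    have f3 : binom (n-2*0-3) (k-0-1) = n-2*0-3 := by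
      rw [show k-0-1 = n-2*0-3-1 from by omega]; exact binom_pred _ (by omega)
    rw [z0, z1, z2, o3, f1, f2, f3]; ring
  · rw [binom_zero 0 (n-k-0) (by omega), binom_zero 0 (n-k-0-1) (by omega),
      binom_zero 0 (n-k-0-2) (by omega), binom_zero 0 (n-k-0-3) (by omega)]
    ring

lemma FpTop (n k : ℤ) : Fp n k (k+1) = 0 := by
  simp only [Fp]
  rw [binom_zero (n-2*(k+1)-5) (k-(k+1)-4) (Or.inl (by omega)),
      binom_zero (n-2*(k+1)-5) (k-(k+1)-3) (Or.inl (by omega)),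
      binom_zero (n-2*(k+1)-4) (k-(k+1)-3) (Or.inl (by omega)),
      binom_zero (n-2*(k+1)-4) (k-(k+1)-2) (Or.inl (by omega)),
      binom_zero (n-2*(k+1)-4) (k-(k+1)-1) (Or.inl (by omega)),
      binom_zero (n-2*(k+1)-3) (k-(k+1)-3) (Or.inl (by omega)),
      binom_zero (n-2*(k+1)-3) (k-(k+1)-2) (Or.inl (by omega)),
      binom_zero (n-2*(k+1)-3) (k-(k+1)-1) (Or.inl (by omega)),
      binom_zero (n-2*(k+1)-2) (k-(k+1)-2) (Or.inl (by omega)),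
      binom_zero (n-2*(k+1)-2) (k-(k+1)-1) (Or.inl (by omega)),
      binom_zero (n-2*(k+1)-1) (k-(k+1)-1) (Or.inl (by omega)),
      binom_zero (n-2*(k+1)-1) (k-(k+1)) (Or.inl (by omega)),
      binom_zero (n-2*(k+1)) (k-(k+1)) (Or.inl (by omega))]
  ring

lemma Sconv (N K : ℤ) (t : ℕ) :
    (∑ j ∈ range t,
      (binom (N - 2 * j) (K - j) * binom (j : ℤ) (N - K - j)
       + binom (N - 2 * j - 1) (K - j) * binom (j : ℤ) (N - K - j - 1)
       - binom (N - 2 * j - 2) (K - j - 2) * binom (j : ℤ) (N - K - j)))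
      = ∑ j ∈ range t, Tt N K (j : ℤ) := rfl

lemma Skey' (m l : ℕ) :
    ∑ j ∈ range (l+1+1), Tt ((m+5 : ℕ) : ℤ) ((l+1 : ℕ) : ℤ) (j : ℤ)
      + ∑ j ∈ range (l+1+1), Tt ((m+4 : ℕ) : ℤ) ((l+1 : ℕ) : ℤ) (j : ℤ)
      + (∑ j ∈ range (l+1+1), Tt ((m+3 : ℕ) : ℤ) ((l+1 : ℕ) : ℤ) (j : ℤ)
         - ∑ j ∈ range (l+1), Tt ((m+3 : ℕ) : ℤ) ((l : ℕ) : ℤ) (j : ℤ))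
      = ∑ j ∈ range (l+2+1), Tt ((m+6 : ℕ) : ℤ) ((l+2 : ℕ) : ℤ) (j : ℤ) := by
  have h1 : ∀ j ∈ range (l+2+1), Tt ((m+6 : ℕ) : ℤ) ((l+2 : ℕ) : ℤ) (j : ℤ)
      = (Tt ((m+5 : ℕ) : ℤ) ((l+1 : ℕ) : ℤ) (j : ℤ) + Tt ((m+4 : ℕ) : ℤ) ((l+1 : ℕ) : ℤ) (j : ℤ)
          + Tt ((m+3 : ℕ) : ℤ) ((l+1 : ℕ) : ℤ) (j : ℤ) - Tt ((m+3 : ℕ) : ℤ) ((l : ℕ) : ℤ) (j : ℤ))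
        + (Fp ((m+6 : ℕ) : ℤ) ((l+2 : ℕ) : ℤ) (j : ℤ)
            - Fp ((m+6 : ℕ) : ℤ) ((l+2 : ℕ) : ℤ) ((j : ℤ)+1)) := by
    intro j _
    have hk := keyTt ((m+6 : ℕ) : ℤ) ((l+2 : ℕ) : ℤ) (j : ℤ) (by omega)
    push_cast at hk ⊢
    ring_nf at hk ⊢
    linarith
  have t1 : ∑ j ∈ range (l+2+1), Tt ((m+5 : ℕ) : ℤ) ((l+1 : ℕ) : ℤ) (j : ℤ)
      = ∑ j ∈ range (l+1+1), Tt ((m+5 : ℕ) : ℤ) ((l+1 : ℕ) : ℤ) (j : ℤ) := by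
    rw [show l+2+1 = l+1+1+1 from rfl, Finset.sum_range_succ,
      Ttzero ((m+5 : ℕ) : ℤ) ((l+1 : ℕ) : ℤ) ((l+1+1 : ℕ) : ℤ) (by push_cast; omega), add_zero]
  have t2 : ∑ j ∈ range (l+2+1), Tt ((m+4 : ℕ) : ℤ) ((l+1 : ℕ) : ℤ) (j : ℤ)
      = ∑ j ∈ range (l+1+1), Tt ((m+4 : ℕ) : ℤ) ((l+1 : ℕ) : ℤ) (j : ℤ) := by
    rw [show l+2+1 = l+1+1+1 from rfl, Finset.sum_range_succ,
      Ttzero ((m+4 : ℕ) : ℤ) ((l+1 : ℕ) : ℤ) ((l+1+1 : ℕ) : ℤ) (by push_cast; omega), add_zero]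
  have t3 : ∑ j ∈ range (l+2+1), Tt ((m+3 : ℕ) : ℤ) ((l+1 : ℕ) : ℤ) (j : ℤ)
      = ∑ j ∈ range (l+1+1), Tt ((m+3 : ℕ) : ℤ) ((l+1 : ℕ) : ℤ) (j : ℤ) := by
    rw [show l+2+1 = l+1+1+1 from rfl, Finset.sum_range_succ,
      Ttzero ((m+3 : ℕ) : ℤ) ((l+1 : ℕ) : ℤ) ((l+1+1 : ℕ) : ℤ) (by push_cast; omega), add_zero]
  have t4 : ∑ j ∈ range (l+2+1), Tt ((m+3 : ℕ) : ℤ) ((l : ℕ) : ℤ) (j : ℤ)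
      = ∑ j ∈ range (l+1), Tt ((m+3 : ℕ) : ℤ) ((l : ℕ) : ℤ) (j : ℤ) := by
    rw [show l+2+1 = l+1+1+1 from rfl, Finset.sum_range_succ, Finset.sum_range_succ,
      Ttzero ((m+3 : ℕ) : ℤ) ((l : ℕ) : ℤ) ((l+1+1 : ℕ) : ℤ) (by push_cast; omega),
      Ttzero ((m+3 : ℕ) : ℤ) ((l : ℕ) : ℤ) ((l+1 : ℕ) : ℤ) (by push_cast; omega),
      add_zero, add_zero]
  have htel : ∑ j ∈ range (l+2+1),
      (Fp ((m+6 : ℕ) : ℤ) ((l+2 : ℕ) : ℤ) (j : ℤ)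
        - Fp ((m+6 : ℕ) : ℤ) ((l+2 : ℕ) : ℤ) ((j : ℤ)+1)) = 0 := by
    have t := Finset.sum_range_sub' (fun i : ℕ => Fp ((m+6 : ℕ) : ℤ) ((l+2 : ℕ) : ℤ) (i : ℤ)) (l+2+1)
    push_cast at t ⊢
    rw [Fp0 ((m:ℤ)+6) ((l:ℤ)+2) (by omega), FpTop ((m:ℤ)+6) ((l:ℤ)+2)] at t
    rw [t]
    ring
  rw [Finset.sum_congr rfl h1, Finset.sum_add_distrib, Finset.sum_sub_distrib,
    Finset.sum_add_distrib, Finset.sum_add_distrib, htel, t1, t2, t3, t4]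
  ring

lemma Dc0 (r : ℕ) (h : 1 ≤ r) : (D r).coeff 0 = 0 := by
  rcases (by omega : r = 1 ∨ r = 2 ∨ r = 3 ∨ r = 4 ∨ r = 5 ∨ 6 ≤ r) with rfl|rfl|rfl|rfl|rfl|h6
  · simp [D]
  · simp [D]
  · simp [D]
  · simp [D]
  · simp [D]
  · obtain ⟨m, rfl⟩ : ∃ m, r = m+6 := ⟨r-6, by omega⟩
    rw [D]
    simp [Polynomial.mul_coeff_zero]

lemma Dstep (m k : ℕ) : (D (m+6)).coeff (k+2)
    = (D (m+5)).coeff (k+1) + (D (m+4)).coeff (k+1)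
      + ((D (m+3)).coeff (k+1) - (D (m+3)).coeff k) := by
  rw [D]
  rw [coeff_add, coeff_add, coeff_X_mul, coeff_X_mul, sub_mul, coeff_sub, coeff_X_mul]
  congr 1
  rw [pow_two, mul_assoc, coeff_X_mul, coeff_X_mul]

lemma Dc1 (m : ℕ) : (D (m+6)).coeff 1 = 0 := by
  rw [D, coeff_add, coeff_add, coeff_X_mul, coeff_X_mul, sub_mul, coeff_sub, coeff_X_mul,
    pow_two, mul_assoc, coeff_X_mul, Polynomial.mul_coeff_zero, coeff_X_zero, zero_mul,
    Dc0 (m+5) (by omega), Dc0 (m+4) (by omega), Dc0 (m+3) (by omega)]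
  ring

theorem D_coeff (n k : ℕ) (hn : 3 ≤ n) :
    (D n).coeff k = ∑ j ∈ range (k + 1),
      (binom ((n : ℤ) - 2 * j) ((k : ℤ) - j) * binom (j : ℤ) ((n : ℤ) - k - j)
       + binom ((n : ℤ) - 2 * j - 1) ((k : ℤ) - j) * binom (j : ℤ) ((n : ℤ) - k - j - 1)
       - binom ((n : ℤ) - 2 * j - 2) ((k : ℤ) - j - 2) * binom (j : ℤ) ((n : ℤ) - k - j)) := by
  induction n using Nat.strong_induction_on generalizing k with
  | _ n ih =>
    rcases (by omega : n = 3 ∨ n = 4 ∨ n = 5 ∨ 6 ≤ n) with rfl | rfl | rfl | h6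
    · rcases (by omega : k = 0 ∨ k = 1 ∨ k = 2 ∨ k = 3 ∨ 4 ≤ k) with rfl|rfl|rfl|rfl|h4
      · rw [show (D 3).coeff 0 = 0 from by simp [D]]; decide
      · rw [show (D 3).coeff 1 = 2 from by simp [D, coeff_X, coeff_X_pow]]; decide
      · rw [show (D 3).coeff 2 = 2 from by simp [D, coeff_X, coeff_X_pow]]; decide
      · rw [show (D 3).coeff 3 = 0 from by simp [D, coeff_X, coeff_X_pow]]; decide
      · obtain ⟨k', rfl⟩ : ∃ k', k = k'+4 := ⟨k-4, by omega⟩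
        rw [show (D 3).coeff (k'+4) = 0 from by simp [D, coeff_X, coeff_X_pow]]
        symm
        apply Finset.sum_eq_zero
        intro j hj
        have hj' := Finset.mem_range.mp hj
        refine term_zero ?_ ?_ ?_ <;> push_cast <;> omega
    · rcases (by omega : k = 0 ∨ k = 1 ∨ k = 2 ∨ k = 3 ∨ k = 4 ∨ 5 ≤ k) with rfl|rfl|rfl|rfl|rfl|h5
      · rw [show (D 4).coeff 0 = 0 from by simp [D, coeff_X, coeff_X_pow]]; decide
      · rw [show (D 4).coeff 1 = 1 from by simp [D, coeff_X, coeff_X_pow]]; decide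
      · rw [show (D 4).coeff 2 = 4 from by simp [D, coeff_X, coeff_X_pow]]; decide
      · rw [show (D 4).coeff 3 = 1 from by simp [D, coeff_X, coeff_X_pow]]; decide
      · rw [show (D 4).coeff 4 = 0 from by simp [D, coeff_X, coeff_X_pow]]; decide
      · obtain ⟨k', rfl⟩ : ∃ k', k = k'+5 := ⟨k-5, by omega⟩
        rw [show (D 4).coeff (k'+5) = 0 from by simp [D, coeff_X, coeff_X_pow]]
        symm
        apply Finset.sum_eq_zero
        intro j hj
        have hj' := Finset.mem_range.mp hj
        refine term_zero ?_ ?_ ?_ <;> push_cast <;> omega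
    · rcases (by omega : k = 0 ∨ k = 1 ∨ k = 2 ∨ k = 3 ∨ k = 4 ∨ k = 5 ∨ 6 ≤ k) with
        rfl|rfl|rfl|rfl|rfl|rfl|h6'
      · rw [show (D 5).coeff 0 = 0 from by simp [D, coeff_X, coeff_X_pow]]; decide
      · rw [show (D 5).coeff 1 = 0 from by simp [D, coeff_X, coeff_X_pow]]; decide
      · rw [show (D 5).coeff 2 = 5 from by simp [D, coeff_X, coeff_X_pow]]; decide
      · rw [show (D 5).coeff 3 = 4 from by simp [D, coeff_X, coeff_X_pow]]; decide
      · rw [show (D 5).coeff 4 = 1 from by simp [D, coeff_X, coeff_X_pow]]; decide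
      · rw [show (D 5).coeff 5 = 0 from by simp [D, coeff_X, coeff_X_pow]]; decide
      · obtain ⟨k', rfl⟩ : ∃ k', k = k'+6 := ⟨k-6, by omega⟩
        rw [show (D 5).coeff (k'+6) = 0 from by simp [D, coeff_X, coeff_X_pow]]
        symm
        apply Finset.sum_eq_zero
        intro j hj
        have hj' := Finset.mem_range.mp hj
        refine term_zero ?_ ?_ ?_ <;> push_cast <;> omega
    · obtain ⟨m, rfl⟩ : ∃ m, n = m+6 := ⟨n-6, by omega⟩
      rcases (by omega : k = 0 ∨ k = 1 ∨ 2 ≤ k) with rfl | rfl | hk2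
      · rw [show (D (m+6)).coeff 0 = 0 from Dc0 (m+6) (by omega)]
        symm
        apply Finset.sum_eq_zero
        intro j hj
        have hj' := Finset.mem_range.mp hj
        refine term_zero ?_ ?_ ?_ <;> push_cast <;> omega
      · rw [Dc1 m]
        symm
        apply Finset.sum_eq_zero
        intro j hj
        have hj' := Finset.mem_range.mp hj
        refine term_zero ?_ ?_ ?_ <;> push_cast <;> omega
      · obtain ⟨l, rfl⟩ : ∃ l, k = l+2 := ⟨k-2, by omega⟩
        rw [Dstep m l,
          ih (m+5) (by omega) (l+1) (by omega),
          ih (m+4) (by omega) (l+1) (by omega),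
          ih (m+3) (by omega) (l+1) (by omega),
          ih (m+3) (by omega) l (by omega),
          Sconv ((m+5 : ℕ) : ℤ) ((l+1 : ℕ) : ℤ) (l+1+1),
          Sconv ((m+4 : ℕ) : ℤ) ((l+1 : ℕ) : ℤ) (l+1+1),
          Sconv ((m+3 : ℕ) : ℤ) ((l+1 : ℕ) : ℤ) (l+1+1),
          Sconv ((m+3 : ℕ) : ℤ) ((l : ℕ) : ℤ) (l+1),
          Sconv ((m+6 : ℕ) : ℤ) ((l+2 : ℕ) : ℤ) (l+2+1)]
        exact Skey' m l
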